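/- Let n ≥ 3 be an even integer and let G be an n-vertex graph with minimum degree δ(G) ≥ n/2. If more than n/2 vertices of G have degree at least n/2 + 1, then for every pair of vertices u, v ∈ V(G) there is a Hamilton path in G with endpoints u and v. -/

import Mathlib

open SimpleGraph Walk List

set_option linter.unusedSectionVars false

section Basic
variable {V : Type*} {G : SimpleGraph V}

lemma count_indep {α : Type*} {i1 i2 : BEq α} [@LawfulBEq α i1] [@LawfulBEq α i2]
    (a : α) : ∀ l : List α, @List.count α i1 a l = @List.count α i2 a l := by
  intro l
  induction l with
  | nil => rfl
  | cons b t ih =>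
    rw [@List.count_cons, @List.count_cons, ih]
    congr 1
    by_cases h : b = a
    · simp [h]
    · simp [h]

lemma support_getElem_eq_getVert {u v : V} (p : G.Walk u v) {i : ℕ} (hi : i < p.support.length) :
    p.support[i] = p.getVert i := by
  induction p generalizing i with
  | nil => simp at hi; simp [hi]
  | cons h q ih =>
    cases i with
    | zero => simp
    | succ j =>
      simp only [Walk.support_cons, Walk.getVert_cons_succ]
      rw [List.getElem_cons_succ]
      exact ih (by simp [Walk.length_support] at hi ⊢; omega)

lemma path_getVert_inj {u v : V} {p : G.Walk u v} (hp : p.support.Nodup) {i j : ℕ}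
    (hi : i ≤ p.length) (hj : j ≤ p.length) (h : p.getVert i = p.getVert j) : i = j := by
  have hi' : i < p.support.length := by rw [Walk.length_support]; omega
  have hj' : j < p.support.length := by rw [Walk.length_support]; omega
  rw [← _root_.support_getElem_eq_getVert p hi', ← _root_.support_getElem_eq_getVert p hj'] at h
  exact (hp.getElem_inj_iff.mp h)

lemma tail_support_length {u v : V} (p : G.Walk u v) : p.support.tail.length = p.length := by
  have := p.length_support
  rw [List.length_tail]
  omega

lemma tail_getElem_eq_getVert {u v : V} (p : G.Walk u v) {k : ℕ}
    (hk : k < p.support.tail.length) : p.support.tail[k] = p.getVert (k+1) := by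
  rw [List.getElem_tail, _root_.support_getElem_eq_getVert]

/-- In a closed walk whose tail-support is nodup, vertex coincidences only at the two ends. -/
lemma closed_getVert_inj {v : V} {c : G.Walk v v} (hnd : c.support.tail.Nodup) {i j : ℕ}
    (hij : i < j) (hj : j ≤ c.length) (h : c.getVert i = c.getVert j) : i = 0 ∧ j = c.length := by
  have hlen := tail_support_length c
  have hi0 : i = 0 := by
    by_contra hi0
    have h1 : c.support.tail[i-1]'(by omega) = c.support.tail[j-1]'(by omega) := by
      rw [tail_getElem_eq_getVert c (by omega), tail_getElem_eq_getVert c (by omega),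
        show i - 1 + 1 = i by omega, show j - 1 + 1 = j by omega]
      exact h
    have := hnd.getElem_inj_iff.mp h1
    omega
  subst hi0
  refine ⟨rfl, ?_⟩
  by_contra hjl
  have h1 : c.support.tail[j-1]'(by omega) = c.support.tail[c.length-1]'(by omega) := by
    rw [tail_getElem_eq_getVert c (by omega), tail_getElem_eq_getVert c (by omega),
      show j - 1 + 1 = j by omega, show c.length - 1 + 1 = c.length by omega, ← h,
      Walk.getVert_zero, Walk.getVert_length]
  have := hnd.getElem_inj_iff.mp h1
  omega

lemma darts_getElem_fst {u v : V} (p : G.Walk u v) {i : ℕ} (hi : i < p.darts.length) :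
    (p.darts[i]).fst = p.getVert i := by
  induction p generalizing i with
  | nil => simp at hi
  | cons h q ih =>
    cases i with
    | zero => simp
    | succ j =>
      simp only [Walk.darts_cons, Walk.getVert_cons_succ, List.getElem_cons_succ]
      exact ih (by simpa using Nat.lt_of_succ_lt_succ (by simpa using hi))

lemma darts_getElem_snd {u v : V} (p : G.Walk u v) {i : ℕ} (hi : i < p.darts.length) :
    (p.darts[i]).snd = p.getVert (i+1) := by
  induction p generalizing i with
  | nil => simp at hi
  | cons h q ih =>
    cases i with
    | zero => rw [Walk.getVert_cons_succ]; simp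
    | succ j =>
      simp only [Walk.darts_cons, Walk.getVert_cons_succ, List.getElem_cons_succ]
      exact ih (by simpa using Nat.lt_of_succ_lt_succ (by simpa using hi))

lemma getVert_inj_cases {v : V} {c : G.Walk v v} (hnd : c.support.tail.Nodup) {i j : ℕ}
    (hi : i ≤ c.length) (hj : j ≤ c.length) (h : c.getVert i = c.getVert j) :
    i = j ∨ (i = 0 ∧ j = c.length) ∨ (j = 0 ∧ i = c.length) := by
  rcases Nat.lt_trichotomy i j with hlt | he | hgt
  · exact Or.inr (Or.inl (closed_getVert_inj hnd hlt hj h))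
  · exact Or.inl he
  · exact Or.inr (Or.inr (closed_getVert_inj hnd hgt hi h.symm))

/-- A closed walk of length ≥ 3 whose tail-support has no duplicates is a cycle. -/
lemma isCycle_of_tail_nodup {v : V} {c : G.Walk v v} (h3 : 3 ≤ c.length)
    (hnd : c.support.tail.Nodup) : c.IsCycle := by
  have hdlen : c.darts.length = c.length := c.length_darts
  have hdnd : c.darts.Nodup := by
    have := c.map_snd_darts
    exact List.Nodup.of_map _ (by rw [this]; exact hnd)
  refine ⟨⟨⟨?_⟩, ?_⟩, hnd⟩
  · -- edges nodup
    show c.edges.Nodup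
    rw [Walk.edges]
    refine List.Nodup.map_on ?_ hdnd
    intro d1 h1 d2 h2 he
    rcases (SimpleGraph.dart_edge_eq_iff d1 d2).mp he with h | h
    · exact h
    · exfalso
      obtain ⟨i, hi, rfl⟩ := List.getElem_of_mem h1
      obtain ⟨j, hj, rfl⟩ := List.getElem_of_mem h2
      -- d1 = d2.symm : fst d1 = snd d2, snd d1 = fst d2
      have e1 : c.getVert i = c.getVert (j+1) := by
        rw [← darts_getElem_fst c hi, ← darts_getElem_snd c hj, h]; rfl
      have e2 : c.getVert (i+1) = c.getVert j := by
        rw [← darts_getElem_snd c hi, ← darts_getElem_fst c hj, h]; rfl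
      rw [hdlen] at hi hj
      rcases getVert_inj_cases hnd (by omega) (by omega) e2 with h' | ⟨h1', h2'⟩ | ⟨h1', h2'⟩
      · -- i+1 = j
        rcases getVert_inj_cases hnd (by omega) (by omega) e1 with h'' | ⟨h1'', h2''⟩ | ⟨h1'', h2''⟩
          <;> omega
      · omega
      · -- j = 0, i+1 = c.length
        rcases getVert_inj_cases hnd (by omega) (by omega) e1 with h'' | ⟨h1'', h2''⟩ | ⟨h1'', h2''⟩
          <;> omega
  · -- c ≠ nil
    intro hnil
    rw [hnil] at h3
    simp at h3

lemma exists_split {x y : V} (p : G.Walk x y) : ∀ (i : ℕ), i ≤ p.length →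
    ∃ (q : G.Walk x (p.getVert i)) (r : G.Walk (p.getVert i) y),
      p = q.append r ∧ q.length = i := by
  induction p with
  | nil =>
    intro i hi
    simp only [Walk.length_nil, Nat.le_zero] at hi
    subst hi
    exact ⟨Walk.nil, Walk.nil, rfl, rfl⟩
  | @cons a b c h q ih =>
    intro i hi
    cases i with
    | zero =>
      refine ⟨Walk.nil.copy rfl ((Walk.getVert_zero _).symm),
        (Walk.cons h q).copy ((Walk.getVert_zero _).symm) rfl, ?_, ?_⟩ <;> simp
    | succ j =>
      obtain ⟨q', r', hqr, hlen⟩ := ih j (by simpa using Nat.lt_succ_iff.mp (Nat.lt_succ_of_le hi))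
      refine ⟨Walk.cons h q', r', ?_, by simp [hlen]⟩
      exact congrArg (Walk.cons h) hqr

end Basic

section Fin
variable {V : Type*} [Fintype V] [DecidableEq V] {G : SimpleGraph V}

lemma hamiltonian_of_hamiltonian_path {x y : V}
    (hcard : 3 ≤ Fintype.card V) (p : G.Walk x y) (hp : p.IsHamiltonian)
    (hdeg : Fintype.card V ≤ (G.neighborSet x).ncard + (G.neighborSet y).ncard) :
    G.IsHamiltonian := by
  classical
  have hlen : p.length = Fintype.card V - 1 := hp.length_eq
  have hpath : p.IsPath := hp.isPath
  have hnd := hpath.support_nodup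
  have hxy : x ≠ y := by
    rintro rfl
    rw [(Walk.isPath_iff_eq_nil (p := p)).mp hpath] at hlen
    simp at hlen
    omega
  have hne1 : Fintype.card V ≠ 1 := by omega
  by_cases hadj : G.Adj x y
  · -- direct cycle
    refine fun _ => ⟨y, Walk.cons hadj.symm p, ?_⟩
    rw [Walk.isHamiltonianCycle_iff_isCycle_and_support_count_tail_eq_one]
    have htail : (Walk.cons hadj.symm p).support.tail = p.support := by simp
    refine ⟨isCycle_of_tail_nodup (by simp; omega) ?_, ?_⟩
    · rw [htail]; exact hnd
    · intro a; rw [htail]; exact hp a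
  · -- crossing argument
    set n := Fintype.card V with hn
    have hlen2 : 2 ≤ p.length := by omega
    set S := (Finset.Icc 1 p.length).filter (fun i => G.Adj x (p.getVert i)) with hSdef
    set T := (Finset.Icc 1 p.length).filter (fun i => G.Adj y (p.getVert (i-1))) with hTdef
    have hS : S.card = (G.neighborSet x).ncard := by
      rw [Set.ncard_eq_toFinset_card']
      apply Finset.card_bij (fun i _ => p.getVert i)
      · intro i hi
        simp only [hSdef, Finset.mem_filter] at hi
        simpa using hi.2
      · intro i hi j hj hij
        simp only [hSdef, Finset.mem_filter, Finset.mem_Icc] at hi hj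
        exact path_getVert_inj hnd hi.1.2 hj.1.2 hij
      · intro w hw
        simp only [Set.mem_toFinset, SimpleGraph.mem_neighborSet] at hw
        obtain ⟨i, hiw, hile⟩ := Walk.mem_support_iff_exists_getVert.mp (hp.mem_support w)
        refine ⟨i, ?_, hiw⟩
        simp only [hSdef, Finset.mem_filter, Finset.mem_Icc, hiw]
        have : i ≠ 0 := by
          rintro rfl
          rw [Walk.getVert_zero] at hiw
          exact hw.ne' hiw.symm
        exact ⟨⟨by omega, hile⟩, hw⟩
    have hT : T.card = (G.neighborSet y).ncard := by
      rw [Set.ncard_eq_toFinset_card']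
      apply Finset.card_bij (fun i _ => p.getVert (i-1))
      · intro i hi
        simp only [hTdef, Finset.mem_filter] at hi
        simpa using hi.2
      · intro i hi j hj hij
        simp only [hTdef, Finset.mem_filter, Finset.mem_Icc] at hi hj
        have := path_getVert_inj hnd (by omega : i - 1 ≤ p.length) (by omega : j - 1 ≤ p.length) hij
        omega
      · intro w hw
        simp only [Set.mem_toFinset, SimpleGraph.mem_neighborSet] at hw
        obtain ⟨j, hjw, hjle⟩ := Walk.mem_support_iff_exists_getVert.mp (hp.mem_support w)
        have : j ≠ p.length := by
          rintro rfl
          rw [Walk.getVert_length] at hjw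
          exact hw.ne' hjw.symm
        refine ⟨j + 1, ?_, by simpa using hjw⟩
        simp only [hTdef, Finset.mem_filter, Finset.mem_Icc, Nat.add_sub_cancel, hjw]
        exact ⟨⟨by omega, by omega⟩, hw⟩
    have hsub : S ∪ T ⊆ Finset.Icc 1 p.length := by
      apply Finset.union_subset <;> exact Finset.filter_subset _ _
    have hunion : (S ∪ T).card ≤ p.length := by
      calc (S ∪ T).card ≤ (Finset.Icc 1 p.length).card := Finset.card_le_card hsub
        _ = p.length := by rw [Nat.card_Icc]; omega
    have hinter : (S ∩ T).Nonempty := by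
      rw [← Finset.card_pos]
      have := Finset.card_union_add_card_inter S T
      omega
    obtain ⟨i, hi⟩ := hinter
    rw [Finset.mem_inter] at hi
    obtain ⟨hiS, hiT⟩ := hi
    simp only [hSdef, Finset.mem_filter, Finset.mem_Icc] at hiS
    simp only [hTdef, Finset.mem_filter, Finset.mem_Icc] at hiT
    obtain ⟨⟨hi1, hile⟩, hxa⟩ := hiS
    obtain ⟨-, hyb⟩ := hiT
    have hilt : i < p.length := by
      rcases Nat.lt_or_ge i p.length with h | h
      · exact h
      · exfalso
        have : i = p.length := by omega
        rw [this, Walk.getVert_length] at hxa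
        exact hadj hxa
    obtain ⟨q, r, hqr, hqlen⟩ := exists_split p (i-1) (by omega)
    have hrlen : r.length = p.length - (i-1) := by
      have := congrArg Walk.length hqr
      rw [Walk.length_append] at this
      omega
    have hrnil : ¬ r.Nil := by
      rw [Walk.not_nil_iff_lt_length]
      omega
    have ha_eq : r.getVert 1 = p.getVert i := by
      conv_rhs => rw [hqr]
      rw [Walk.getVert_append]
      rw [if_neg (by omega)]
      congr 1
      omega
    have hxa' : G.Adj x (r.getVert 1) := by rw [ha_eq]; exact hxa
    set rt := r.tail with hrt
    have hr_eq : Walk.cons (r.adj_snd hrnil) rt = r := Walk.cons_tail_eq r hrnil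
    set c : G.Walk x x :=
      q.append ((Walk.cons hyb.symm rt.reverse).append (Walk.cons hxa'.symm Walk.nil)) with hc
    have hrt_len : rt.length + 1 = r.length := Walk.length_tail_add_one hrnil
    have hclen : c.length = p.length + 1 := by
      rw [hc]
      simp only [Walk.length_append, Walk.length_cons, Walk.length_reverse, Walk.length_nil]
      omega
    have hr_supp : r.support.tail = rt.support := by
      conv_lhs => rw [← hr_eq]
      simp
    have hq_supp : q.support = x :: q.support.tail := q.support_eq_cons
    have hc_supp : c.support.tail = q.support.tail ++ (rt.reverse.support ++ [x]) := by
      rw [hc]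
      rw [Walk.support_append, Walk.support_append]
      simp only [Walk.support_cons, List.tail_cons]
      conv_lhs => rw [hq_supp]
      simp
    have hcount : ∀ z, c.support.tail.count z = 1 := by
      intro z
      have hpz := hp z
      rw [hqr, Walk.support_append, hr_supp] at hpz
      rw [List.count_append] at hpz
      conv at hpz => lhs; lhs; rw [hq_supp]
      rw [List.count_cons] at hpz
      rw [hc_supp]
      simp only [List.count_append, List.count_reverse, List.count_singleton]
      rw [Walk.support_reverse, List.count_reverse]
      omega
    refine fun _ => ⟨x, c, ?_⟩
    rw [Walk.isHamiltonianCycle_iff_isCycle_and_support_count_tail_eq_one]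
    exact ⟨isCycle_of_tail_nodup (by omega) (List.nodup_iff_count_le_one.mpr
      (fun z => le_of_eq (hcount z))), hcount⟩

end Fin

section Rot
variable {V : Type*} [DecidableEq V] {G : SimpleGraph V}

lemma hamCycle_rotate {a b : V} {c : G.Walk a a} (hc : c.IsHamiltonianCycle)
    (hb : b ∈ c.support) : (c.rotate _ hb).IsHamiltonianCycle := by
  rw [Walk.isHamiltonianCycle_iff_isCycle_and_support_count_tail_eq_one] at hc ⊢
  refine ⟨hc.1.rotate hb, fun z => ?_⟩
  rw [((c.support_rotate _ hb).perm).count_eq]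
  exact hc.2 z

lemma hamCycle_reverse {a : V} {c : G.Walk a a} (hc : c.IsHamiltonianCycle) :
    c.reverse.IsHamiltonianCycle := by
  rw [Walk.isHamiltonianCycle_iff_isCycle_and_support_count_tail_eq_one] at hc ⊢
  obtain ⟨hcyc, hcount⟩ := hc
  have key : ∀ z, c.reverse.support.tail.count z = c.support.tail.count z := by
    intro z
    have h1 : c.support = a :: c.support.tail := c.support_eq_cons
    have h2 : c.reverse.support = a :: c.reverse.support.tail := c.reverse.support_eq_cons
    have h3 : c.reverse.support = c.support.reverse := c.support_reverse
    have : (a :: c.reverse.support.tail).count z = (a :: c.support.tail).count z := by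
      rw [← h2, h3, List.count_reverse, ← h1]
    rw [List.count_cons, List.count_cons] at this
    exact Nat.add_right_cancel this
  refine ⟨?_, fun z => (key z).trans (hcount z)⟩
  have h3 : 3 ≤ c.length := hcyc.three_le_length
  apply isCycle_of_tail_nodup
  · rwa [Walk.length_reverse]
  · exact List.nodup_iff_count_le_one.mpr (fun z => le_of_eq ((key z).trans (hcount z)))

end Rot

section Desc
variable {V : Type*} [Fintype V] [DecidableEq V]

lemma ncard_neighbor_mono {G H : SimpleGraph V} (h : G ≤ H) (x : V) :
    (G.neighborSet x).ncard ≤ (H.neighborSet x).ncard :=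
  Set.ncard_le_ncard (fun _ hz => h hz) (Set.toFinite _)

lemma hamiltonian_descend (hcard : 3 ≤ Fintype.card V) :
    ∀ (k : ℕ) (G G' : SimpleGraph V), G'.edgeSet.ncard ≤ G.edgeSet.ncard + k → G ≤ G' →
    (∀ a b, G'.Adj a b → ¬ G.Adj a b →
      Fintype.card V ≤ (G.neighborSet a).ncard + (G.neighborSet b).ncard) →
    G'.IsHamiltonian → G.IsHamiltonian := by
  classical
  intro k
  induction k with
  | zero =>
    intro G G' hk hle _ hham
    have hsub : G.edgeSet ⊆ G'.edgeSet := SimpleGraph.edgeSet_mono hle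
    have : G.edgeSet = G'.edgeSet :=
      Set.eq_of_subset_of_ncard_le hsub (by omega) (Set.toFinite _)
    rwa [SimpleGraph.edgeSet_inj.mp this]
  | succ k ih =>
    intro G G' hk hle hcond hham
    by_cases heq : G = G'
    · rwa [heq]
    -- find a missing edge
    have hlt : G < G' := lt_of_le_of_ne hle heq
    have hnle : ¬ (G' ≤ G) := fun h => heq (le_antisymm hle h)
    have hex : ∃ a b, G'.Adj a b ∧ ¬ G.Adj a b := by
      by_contra h
      push_neg at h
      exact hnle (fun v w hvw => h v w hvw)
    obtain ⟨a, b, hab', hab⟩ := hex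
    have hne : a ≠ b := hab'.ne
    set G2 := G ⊔ SimpleGraph.edge a b with hG2
    have hG2le : G ≤ G2 := le_sup_left
    have hG2le' : G2 ≤ G' := by
      rw [hG2, sup_le_iff]
      refine ⟨hle, ?_⟩
      intro x y hxy
      rw [SimpleGraph.edge_adj] at hxy
      rcases hxy.1 with ⟨rfl, rfl⟩ | ⟨rfl, rfl⟩
      · exact hab'
      · exact hab'.symm
    have hG2adj : ∀ x y, G2.Adj x y ↔ G.Adj x y ∨ ((x = a ∧ y = b) ∨ (x = b ∧ y = a)) := by
      intro x y
      rw [hG2, SimpleGraph.sup_adj, SimpleGraph.edge_adj]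
      constructor
      · rintro (h | ⟨h, -⟩)
        · exact Or.inl h
        · exact Or.inr h
      · rintro (h | h)
        · exact Or.inl h
        · refine Or.inr ⟨h, ?_⟩
          rcases h with ⟨rfl, rfl⟩ | ⟨rfl, rfl⟩
          · exact hne
          · exact hne.symm
    have hcard2 : G2.edgeSet.ncard = G.edgeSet.ncard + 1 := by
      rw [hG2, SimpleGraph.edgeSet_sup]
      have hes : (SimpleGraph.edge a b).edgeSet = {s(a, b)} := by
        ext e
        induction e using Sym2.ind with
        | _ x y =>
          rw [SimpleGraph.mem_edgeSet, SimpleGraph.edge_adj, Set.mem_singleton_iff, Sym2.eq_iff]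
          constructor
          · exact fun h => h.1
          · rintro (⟨rfl, rfl⟩ | ⟨rfl, rfl⟩)
            · exact ⟨Or.inl ⟨rfl, rfl⟩, hne⟩
            · exact ⟨Or.inr ⟨rfl, rfl⟩, hne.symm⟩
      rw [hes, Set.union_singleton, Set.ncard_insert_of_notMem (by rwa [SimpleGraph.mem_edgeSet]) (Set.toFinite _)]
    have hham2 : G2.IsHamiltonian := by
      apply ih G2 G' (by rw [hcard2]; omega) hG2le' _ hham
      intro x y hxy' hxy2
      have hxyG : ¬ G.Adj x y := fun h => hxy2 (hG2le h)
      calc Fintype.card V ≤ (G.neighborSet x).ncard + (G.neighborSet y).ncard :=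
            hcond x y hxy' hxyG
        _ ≤ (G2.neighborSet x).ncard + (G2.neighborSet y).ncard :=
            Nat.add_le_add (ncard_neighbor_mono hG2le x) (ncard_neighbor_mono hG2le y)
    -- now descend from G2 to G
    have hne1 : Fintype.card V ≠ 1 := by omega
    obtain ⟨w0, c, hc⟩ := hham2 hne1
    by_cases he : s(a, b) ∈ c.edges
    · -- the cycle uses edge ab: produce hamiltonian path in G from b to a
      have ha_supp : a ∈ c.support := hc.mem_support a
      set c1 := c.rotate _ ha_supp with hc1
      have hc1ham : c1.IsHamiltonianCycle := hamCycle_rotate hc ha_supp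
      have he1 : s(a, b) ∈ c1.edges := ((c.rotate_edges _ ha_supp).perm.mem_iff).mpr he
      -- find c2 hamiltonian cycle from a with second vertex b
      have key : ∃ c2 : G2.Walk a a, c2.IsHamiltonianCycle ∧ c2.getVert 1 = b ∧
          s(a, b) ∈ c2.edges := by
        have hnd1 : c1.support.tail.Nodup := hc1ham.isCycle.2
        obtain ⟨d, hd, hde⟩ := List.mem_map.mp (by rw [← Walk.edges] ; exact he1)
        obtain ⟨i, hi, rfl⟩ := List.getElem_of_mem hd
        have hil : i < c1.length := by rwa [Walk.length_darts] at hi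
        rcases (SimpleGraph.dart_edge_eq_mk'_iff').mp hde with ⟨h1, h2⟩ | ⟨h1, h2⟩
        · -- fst = a, snd = b
          have hfst : c1.getVert i = a := by rw [← darts_getElem_fst c1 hi, h1]
          have hi0 : i = 0 := by
            by_contra h0
            have := closed_getVert_inj hnd1 (show 0 < i by omega) (by omega)
              (by rw [Walk.getVert_zero, hfst])
            omega
          subst hi0
          refine ⟨c1, hc1ham, ?_, he1⟩
          rw [← darts_getElem_snd c1 hi, h2]
        · -- fst = b, snd = a
          have hsnd : c1.getVert (i+1) = a := by rw [← darts_getElem_snd c1 hi, h2]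
          have hilen : i + 1 = c1.length := by
            by_contra h0
            have := closed_getVert_inj hnd1 (show 0 < i + 1 by omega) (by omega)
              (by rw [Walk.getVert_zero, hsnd])
            omega
          refine ⟨c1.reverse, hamCycle_reverse hc1ham, ?_, ?_⟩
          · rw [Walk.getVert_reverse, show c1.length - 1 = i by omega,
              ← darts_getElem_fst c1 hi, h1]
          · rw [Walk.edges_reverse, List.mem_reverse]
            exact he1
      obtain ⟨c2, hc2, hc2v, hc2e⟩ := key
      have hnil : ¬ c2.Nil := hc2.isCycle.not_nil
      set q := c2.tail with hq
      have hcons : Walk.cons (c2.adj_snd hnil) q = c2 := Walk.cons_tail_eq c2 hnil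
      have hq_supp : q.support = c2.support.tail := Walk.support_tail_of_not_nil c2 hnil
      have hq_count : ∀ z, q.support.count z = 1 := by
        intro z
        rw [hq_supp]
        exact (Walk.isHamiltonianCycle_iff_isCycle_and_support_count_tail_eq_one.mp hc2).2 z
      have hq_edges : s(a, b) ∉ q.edges := by
        have hnodup : c2.edges.Nodup := hc2.isCycle.edges_nodup
        intro hmem
        rw [← hcons, Walk.edges_cons] at hnodup
        rw [List.nodup_cons] at hnodup
        have hee : s(a, c2.getVert 1) = s(a, b) := by rw [hc2v]
        exact hnodup.1 (by rw [hee]; exact hmem)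
      -- q is a walk in G
      have hq_sub : ∀ e ∈ q.edges, e ∈ G.edgeSet := by
        intro e heq
        have h2 : e ∈ G2.edgeSet := q.edges_subset_edgeSet heq
        revert heq h2
        induction e using Sym2.ind with
        | _ x y =>
          intro heq h2
          rw [SimpleGraph.mem_edgeSet] at h2 ⊢
          rcases (hG2adj x y).mp h2 with h | h
          · exact h
          · exfalso
            apply hq_edges
            rcases h with ⟨rfl, rfl⟩ | ⟨rfl, rfl⟩
            · exact heq
            · rwa [Sym2.eq_swap] at heq
      set q0 : G.Walk (c2.getVert 1) a := q.transfer G hq_sub with hq0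
      have hq0_ham : q0.IsHamiltonian := by
        intro z
        rw [hq0, Walk.support_transfer]
        exact hq_count z
      have hdeg := hcond a b hab' hab
      -- cast start to b
      have hq0c_ham : (q0.copy hc2v rfl).IsHamiltonian := by
        intro z
        rw [Walk.support_copy]
        exact hq0_ham z
      exact hamiltonian_of_hamiltonian_path hcard (q0.copy hc2v rfl) hq0c_ham (by omega)
    · -- cycle avoids edge ab : transfer
      have hsub : ∀ e ∈ c.edges, e ∈ G.edgeSet := by
        intro e heq
        have h2 : e ∈ G2.edgeSet := c.edges_subset_edgeSet heq
        revert heq h2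
        induction e using Sym2.ind with
        | _ x y =>
          intro heq h2
          rw [SimpleGraph.mem_edgeSet] at h2 ⊢
          rcases (hG2adj x y).mp h2 with h | h
          · exact h
          · exfalso
            apply he
            rcases h with ⟨rfl, rfl⟩ | ⟨rfl, rfl⟩
            · exact heq
            · rwa [Sym2.eq_swap] at heq
      refine fun _ => ⟨w0, c.transfer G hsub, ?_⟩
      rw [Walk.isHamiltonianCycle_iff_isCycle_and_support_count_tail_eq_one]
      refine ⟨hc.isCycle.transfer hsub, fun z => ?_⟩
      rw [Walk.support_transfer]
      exact (Walk.isHamiltonianCycle_iff_isCycle_and_support_count_tail_eq_one.mp hc).2 z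

lemma top_walk_through (l : List V) : ∀ (a b : V), a ∉ l → b ∉ l → a ≠ b → l.Nodup →
    ∃ p : (⊤ : SimpleGraph V).Walk a b, p.support = a :: (l ++ [b]) := by
  induction l with
  | nil =>
    intro a b _ _ hab _
    exact ⟨Walk.cons (by simp [hab]) Walk.nil, by simp⟩
  | cons c t ih =>
    intro a b ha hb hab hnd
    have hac : a ≠ c := by simp at ha; tauto
    have hcb : c ≠ b := by simp at hb; tauto
    rw [List.nodup_cons] at hnd
    obtain ⟨p, hp⟩ := ih c b hnd.1 (by simp at hb; tauto) hcb hnd.2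
    exact ⟨Walk.cons (by simp [hac]) p, by simp [hp]⟩

lemma top_isHamiltonian (hcard : 3 ≤ Fintype.card V) :
    (⊤ : SimpleGraph V).IsHamiltonian := by
  classical
  intro _
  have hlen : (Finset.univ : Finset V).toList.length = Fintype.card V := by
    rw [Finset.length_toList, Finset.card_univ]
  have hnd : (Finset.univ : Finset V).toList.Nodup := Finset.nodup_toList _
  rcases hl : (Finset.univ : Finset V).toList with _ | ⟨a, t⟩
  · rw [hl] at hlen; simp at hlen; omega
  rcases t with _ | ⟨w, t2⟩
  · rw [hl] at hlen; simp at hlen; omega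
  rw [hl] at hnd
  rw [List.nodup_cons, List.nodup_cons] at hnd
  obtain ⟨ha, hw, hnd2⟩ := hnd
  have haw : a ≠ w := by simp at ha; tauto
  obtain ⟨p, hp⟩ := top_walk_through t2 w a hw (by simp at ha; tauto) haw.symm hnd2
  refine ⟨a, Walk.cons (by simp [haw]) p, ?_⟩
  rw [Walk.isHamiltonianCycle_iff_isCycle_and_support_count_tail_eq_one]
  have htail : (Walk.cons (by simp [haw] : (⊤ : SimpleGraph V).Adj a w) p).support.tail
      = w :: (t2 ++ [a]) := by simp [hp]
  have hperm : (w :: (t2 ++ [a])) ~ (a :: w :: t2) := by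
    rw [← List.cons_append]
    exact List.perm_append_singleton _ _
  have hcount : ∀ z, ((Walk.cons (by simp [haw] : (⊤ : SimpleGraph V).Adj a w) p).support.tail).count z = 1 := by
    intro z
    rw [htail, hperm.count_eq]
    rw [← hl]
    have hz : z ∈ (Finset.univ : Finset V).toList := by simp [Finset.mem_toList]
    exact List.count_eq_one_of_mem (by rw [hl]; exact (List.nodup_cons.mpr ⟨ha, List.nodup_cons.mpr ⟨hw, hnd2⟩⟩)) hz
  refine ⟨isCycle_of_tail_nodup ?_ ?_, hcount⟩
  · have : (Walk.cons (by simp [haw] : (⊤ : SimpleGraph V).Adj a w) p).length + 1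
        = (Walk.cons (by simp [haw] : (⊤ : SimpleGraph V).Adj a w) p).support.length := by
      rw [Walk.length_support]
    have h2 : (Walk.cons (by simp [haw] : (⊤ : SimpleGraph V).Adj a w) p).support.length
        = t2.length + 3 := by simp [hp]
    have hlen2 : Fintype.card V = t2.length + 2 := by rw [← hlen, hl]; simp
    omega
  · exact List.nodup_iff_count_le_one.mpr (fun z => le_of_eq (hcount z))

end Desc

section Lift
variable {V : Type*} [DecidableEq V]

/-- The auxiliary graph on `Option V`: `some`-vertices linked as in `K`, and `none`
linked exactly to `some u` and `some v`. -/
def liftG (K : SimpleGraph V) (u v : V) : SimpleGraph (Option V) where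
  Adj x y := match x, y with
    | some a, some b => K.Adj a b
    | some a, none => a = u ∨ a = v
    | none, some b => b = u ∨ b = v
    | none, none => False
  symm := by
    constructor
    intro x y h
    match x, y with
    | some a, some b => exact K.adj_symm h
    | some a, none => exact h
    | none, some b => exact h
    | none, none => exact h
  loopless := by
    constructor
    intro x h
    match x with
    | some a => exact K.irrefl h
    | none => exact h

@[simp] lemma liftG_adj_some_some {K : SimpleGraph V} {u v : V} {a b : V} :
    (liftG K u v).Adj (some a) (some b) ↔ K.Adj a b := Iff.rfl
@[simp] lemma liftG_adj_none_some {K : SimpleGraph V} {u v : V} {b : V} :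
    (liftG K u v).Adj none (some b) ↔ b = u ∨ b = v := Iff.rfl
@[simp] lemma liftG_adj_some_none {K : SimpleGraph V} {u v : V} {a : V} :
    (liftG K u v).Adj (some a) none ↔ a = u ∨ a = v := Iff.rfl
@[simp] lemma liftG_adj_none_none {K : SimpleGraph V} {u v : V} :
    ¬ (liftG K u v).Adj none none := fun h => h

lemma liftG_adj_none {K : SimpleGraph V} {u v : V} {y : Option V}
    (h : (liftG K u v).Adj none y) : y = some u ∨ y = some v := by
  match y with
  | some b => rcases h with h | h <;> [exact Or.inl (by rw [h]); exact Or.inr (by rw [h])]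
  | none => exact absurd h (liftG_adj_none_none)

lemma liftG_mono {K K' : SimpleGraph V} (h : K ≤ K') (u v : V) :
    liftG K u v ≤ liftG K' u v := by
  intro x y hxy
  match x, y with
  | some a, some b => exact h hxy
  | some a, none => exact hxy
  | none, some b => exact hxy
  | none, none => exact hxy

lemma liftG_walk_down {K : SimpleGraph V} {u v : V} :
    ∀ {x y : Option V} (r : (liftG K u v).Walk x y) {a b : V}, x = some a → y = some b →
    none ∉ r.support → ∃ p : K.Walk a b, ∀ z, p.support.count z = r.support.count (some z) := by
  intro x y r
  induction r with
  | nil =>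
    rintro a b rfl hab hn
    obtain rfl : a = b := by injection hab
    refine ⟨Walk.nil, fun z => ?_⟩
    by_cases hz : z = a
    · subst hz; simp
    · have h1 : (some z) ≠ some a := by simpa using hz
      simp [List.count_cons, Ne.symm hz]
  | @cons x w y h r' ih =>
    rintro a b rfl rfl hn
    rw [Walk.support_cons, List.mem_cons] at hn
    push_neg at hn
    obtain ⟨-, hn2⟩ := hn
    have hw : w ≠ none := fun hw => hn2 (hw ▸ r'.start_mem_support)
    obtain ⟨a', rfl⟩ := Option.ne_none_iff_exists'.mp hw
    obtain ⟨p', hp'⟩ := ih rfl rfl hn2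
    refine ⟨Walk.cons (liftG_adj_some_some.mp h) p', fun z => ?_⟩
    rw [Walk.support_cons, Walk.support_cons, List.count_cons, List.count_cons, hp' z]
    simp

end Lift

/-- **Lemma (part 1).** Let `n ≥ 3` be even and `G` an `n`-vertex graph with
`δ(G) ≥ n/2`. If more than `n/2` vertices have degree at least `n/2 + 1`, then
for every pair of vertices `u, v` there is a Hamilton `{u,v}`-path. -/
theorem hamilton_path_many_large_degrees_even (n : ℕ) (hn : 3 ≤ n) (hne : Even n)
    (G : SimpleGraph (Fin n)) [DecidableRel G.Adj]
    (hδ : n / 2 ≤ G.minDegree)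
    (hbig : n / 2 < (Finset.univ.filter (fun v => n / 2 + 1 ≤ G.degree v)).card)
    (u v : Fin n) (huv : u ≠ v) :
    ∃ p : G.Walk u v, p.IsHamiltonian := by
  classical
  have hn2 : n / 2 + n / 2 = n := by
    obtain ⟨k, hk⟩ := hne; omega
  set B : Finset (Fin n) := Finset.univ.filter (fun v => n / 2 + 1 ≤ G.degree v) with hBdef
  have hdeg_ncard : ∀ w : Fin n, (G.neighborSet w).ncard = G.degree w := by
    intro w
    rw [Set.ncard_eq_toFinset_card', Set.toFinset_card]
    exact SimpleGraph.card_neighborSet_eq_degree G w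
  have hmin : ∀ w : Fin n, n / 2 ≤ (G.neighborSet w).ncard := by
    intro w
    rw [hdeg_ncard]
    exact le_trans hδ (G.minDegree_le_degree w)
  have hBn : ∀ w ∈ B, n / 2 + 1 ≤ (G.neighborSet w).ncard := by
    intro w hw
    rw [hdeg_ncard]
    rw [hBdef, Finset.mem_filter] at hw
    exact hw.2
  have hBcard : n / 2 + 1 ≤ B.card := hbig
  have hcardO : Fintype.card (Option (Fin n)) = n + 1 := by simp
  have hcardO3 : 3 ≤ Fintype.card (Option (Fin n)) := by omega
  -- the chain of graphs
  set G1 : SimpleGraph (Fin n) := G ⊔ SimpleGraph.fromRel (fun a b => a ∈ B ∧ b ∈ B) with hG1def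
  set G2 : SimpleGraph (Fin n) := G ⊔ SimpleGraph.fromRel (fun a b => a ∈ B) with hG2def
  have hGG1 : G ≤ G1 := le_sup_left
  have hG1G2 : G1 ≤ G2 := by
    rw [hG1def, hG2def, sup_le_iff]
    refine ⟨le_sup_left, le_trans ?_ le_sup_right⟩
    intro a b hab
    rw [SimpleGraph.fromRel_adj] at hab ⊢
    refine ⟨hab.1, Or.inl ?_⟩
    rcases hab.2 with ⟨h, -⟩ | ⟨-, h⟩
    · exact h
    · exact h
  -- lower bounds on neighbourhood sizes in the lifted graphs
  have hlift_some : ∀ (K : SimpleGraph (Fin n)) (a : Fin n),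
      (K.neighborSet a).ncard ≤ ((liftG K u v).neighborSet (some a)).ncard := by
    intro K a
    have himg : (some '' (K.neighborSet a) : Set (Option (Fin n)))
        ⊆ (liftG K u v).neighborSet (some a) := by
      rintro _ ⟨b, hb, rfl⟩
      exact hb
    calc (K.neighborSet a).ncard
        = (some '' (K.neighborSet a) : Set (Option (Fin n))).ncard :=
          (Set.ncard_image_of_injective _ (Option.some_injective _)).symm
      _ ≤ _ := Set.ncard_le_ncard himg (Set.toFinite _)
  have hlift_none : ∀ (K : SimpleGraph (Fin n)),
      2 ≤ ((liftG K u v).neighborSet none).ncard := by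
    intro K
    have hsub : ({some u, some v} : Set (Option (Fin n)))
        ⊆ (liftG K u v).neighborSet none := by
      rintro x (rfl | rfl)
      · exact Or.inl rfl
      · exact Or.inr rfl
    calc 2 = ({some u, some v} : Set (Option (Fin n))).ncard := by
          rw [Set.ncard_pair (by simpa using huv)]
      _ ≤ _ := Set.ncard_le_ncard hsub (Set.toFinite _)
  have htop_ncard : ∀ a : Fin n, ((⊤ : SimpleGraph (Fin n)).neighborSet a).ncard = n - 1 := by
    intro a
    have hset : (⊤ : SimpleGraph (Fin n)).neighborSet a = {a}ᶜ := by
      ext b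
      simp [SimpleGraph.top_adj, ne_comm]
    rw [hset, Set.ncard_eq_toFinset_card', Set.toFinset_compl, Finset.card_compl]
    simp
  -- step 3 : liftG ⊤ is hamiltonian
  have hH3 : (liftG (⊤ : SimpleGraph (Fin n)) u v).IsHamiltonian := by
    apply hamiltonian_descend hcardO3 ((⊤ : SimpleGraph (Option (Fin n))).edgeSet.ncard)
      _ ⊤ (Nat.le_add_left _ _) le_top _ (top_isHamiltonian hcardO3)
    intro x y hxy hnxy
    match x, y with
    | some a, some b =>
      exact absurd (liftG_adj_some_some.mpr (by simpa using hxy)) hnxy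
    | some a, none =>
      have h1 := hlift_some ⊤ a
      have h2 := hlift_none (⊤ : SimpleGraph (Fin n))
      rw [htop_ncard a] at h1
      omega
    | none, some b =>
      have h1 := hlift_some ⊤ b
      have h2 := hlift_none (⊤ : SimpleGraph (Fin n))
      rw [htop_ncard b] at h1
      omega
    | none, none => exact absurd hxy (SimpleGraph.irrefl _)
  -- step 2 : liftG G2 is hamiltonian
  have hG2big : ∀ a : Fin n, n / 2 + 1 ≤ ((liftG G2 u v).neighborSet (some a)).ncard := by
    intro a
    refine le_trans ?_ (hlift_some G2 a)
    by_cases ha : a ∈ B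
    · refine le_trans (hBn a ha) (Set.ncard_le_ncard ?_ (Set.toFinite _))
      intro z hz
      exact le_sup_left (α := SimpleGraph (Fin n)) hz
    · calc n / 2 + 1 ≤ B.card := hBcard
        _ = (↑B : Set (Fin n)).ncard := (Set.ncard_coe_finset B).symm
        _ ≤ (G2.neighborSet a).ncard := by
            refine Set.ncard_le_ncard ?_ (Set.toFinite _)
            intro b hb
            have hba : b ≠ a := fun h => ha (h ▸ hb)
            refine le_sup_right (α := SimpleGraph (Fin n)) ?_
            rw [SimpleGraph.fromRel_adj]
            exact ⟨hba.symm, Or.inr hb⟩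
  have hH2 : (liftG G2 u v).IsHamiltonian := by
    apply hamiltonian_descend hcardO3 ((liftG (⊤ : SimpleGraph (Fin n)) u v).edgeSet.ncard)
      _ _ (Nat.le_add_left _ _) (liftG_mono le_top u v) _ hH3
    intro x y hxy hnxy
    match x, y with
    | some a, some b =>
      have h1 := hG2big a
      have h2 := hG2big b
      omega
    | some a, none => exact absurd hxy hnxy
    | none, some b => exact absurd hxy hnxy
    | none, none => exact absurd hxy (SimpleGraph.irrefl _)
  -- step 1 : liftG G1 is hamiltonian
  have hG1ncard : ∀ a : Fin n, (G.neighborSet a).ncard ≤ ((liftG G1 u v).neighborSet (some a)).ncard := by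
    intro a
    refine le_trans ?_ (hlift_some G1 a)
    exact Set.ncard_le_ncard (fun z hz => le_sup_left (α := SimpleGraph (Fin n)) hz) (Set.toFinite _)
  have hH1 : (liftG G1 u v).IsHamiltonian := by
    apply hamiltonian_descend hcardO3 ((liftG G2 u v).edgeSet.ncard)
      _ _ (Nat.le_add_left _ _) (liftG_mono hG1G2 u v) _ hH2
    intro x y hxy hnxy
    match x, y with
    | some a, some b =>
      have hadj : G2.Adj a b := hxy
      have hnadj : ¬ G1.Adj a b := hnxy
      have hmem : a ∈ B ∨ b ∈ B := by
        rw [hG2def, SimpleGraph.sup_adj, SimpleGraph.fromRel_adj] at hadj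
        rcases hadj with h | ⟨-, h⟩
        · exact absurd (hGG1 h) hnadj
        · exact h
      have hda := hG1ncard a
      have hdb := hG1ncard b
      have hma := hmin a
      have hmb := hmin b
      rcases hmem with h | h
      · have := le_trans (hBn a h) (hG1ncard a)
        omega
      · have := le_trans (hBn b h) (hG1ncard b)
        omega
    | some a, none => exact absurd hxy hnxy
    | none, some b => exact absurd hxy hnxy
    | none, none => exact absurd hxy (SimpleGraph.irrefl _)
  -- step 0 : liftG G is hamiltonian
  have hH0 : (liftG G u v).IsHamiltonian := by
    apply hamiltonian_descend hcardO3 ((liftG G1 u v).edgeSet.ncard)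
      _ _ (Nat.le_add_left _ _) (liftG_mono hGG1 u v) _ hH1
    intro x y hxy hnxy
    match x, y with
    | some a, some b =>
      have hadj : G1.Adj a b := hxy
      have hnadj : ¬ G.Adj a b := hnxy
      have hmem : a ∈ B ∧ b ∈ B := by
        rw [hG1def, SimpleGraph.sup_adj, SimpleGraph.fromRel_adj] at hadj
        rcases hadj with h | ⟨-, h | h⟩
        · exact absurd h hnadj
        · exact h
        · exact ⟨h.2, h.1⟩
      have hda := le_trans (hBn a hmem.1) (hlift_some G a)
      have hdb := le_trans (hBn b hmem.2) (hlift_some G b)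
      omega
    | some a, none => exact absurd hxy hnxy
    | none, some b => exact absurd hxy hnxy
    | none, none => exact absurd hxy (SimpleGraph.irrefl _)
  -- extraction of the hamiltonian path
  obtain ⟨a0, c, hc⟩ := hH0 (by omega)
  have hnone : (none : Option (Fin n)) ∈ c.support := hc.mem_support none
  set c' := c.rotate _ hnone with hc'def
  have hc' : c'.IsHamiltonianCycle := hamCycle_rotate hc hnone
  have hnil : ¬ c'.Nil := hc'.isCycle.not_nil
  have hclen : c'.length = n + 1 := by rw [hc'.length_eq, hcardO]
  set q := c'.tail with hqdef
  have hq_supp : q.support = c'.support.tail := Walk.support_tail_of_not_nil c' hnil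
  have hq_count : ∀ z, q.support.count z = 1 := by
    intro z
    rw [hq_supp]
    have h := (Walk.isHamiltonianCycle_iff_isCycle_and_support_count_tail_eq_one.mp hc').2 z
    rwa [count_indep (i1 := instBEqOfDecidableEq) (i2 := Option.instBEq) z] at h
  have hq_len : q.length = n := by
    have := Walk.length_tail_add_one hnil
    rw [hqdef]
    omega
  have hadj1 : (liftG G u v).Adj none (c'.getVert 1) := c'.adj_snd hnil
  have hqnil : ¬ q.Nil := by rw [Walk.not_nil_iff_lt_length]; omega
  set qr := q.reverse with hqrdef
  have hqr_len : qr.length = n := by rw [hqrdef, Walk.length_reverse]; exact hq_len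
  have hqrnil : ¬ qr.Nil := by rw [Walk.not_nil_iff_lt_length]; omega
  have hadj2 : (liftG G u v).Adj none (qr.getVert 1) := qr.adj_snd hqrnil
  set r := qr.tail with hrdef
  have hr_supp : r.support = qr.support.tail := Walk.support_tail_of_not_nil qr hqrnil
  have hqr_cons : qr.support = none :: r.support := by
    rw [hr_supp]; exact qr.support_eq_cons
  have hqr_count : ∀ z, qr.support.count z = q.support.count z := by
    intro z; rw [hqrdef, Walk.support_reverse, List.count_reverse]
  have hr_count_some : ∀ w : Fin n, r.support.count (some w) = 1 := by
    intro w
    have h1 := hqr_count (some w)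
    rw [hqr_cons, List.count_cons] at h1
    rw [if_neg (by simp)] at h1
    rw [hq_count (some w)] at h1
    omega
  have hr_none : (none : Option (Fin n)) ∉ r.support := by
    have h1 := hqr_count none
    rw [hqr_cons, List.count_cons_self, hq_count none] at h1
    rw [← List.count_pos_iff]
    omega
  have hr_len : r.length = n - 1 := by
    have := Walk.length_tail_add_one hqrnil
    rw [hrdef]
    omega
  have hr_nodup : r.support.Nodup := by
    rw [List.nodup_iff_count_le_one]
    intro z
    match z with
    | some w => exact le_of_eq (hr_count_some w)
    | none =>
      have h0 : r.support.count none = 0 := List.count_eq_zero.mpr hr_none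
      omega
  have hne_ends : qr.getVert 1 ≠ c'.getVert 1 := by
    intro heq
    have hpath : (r.copy heq rfl).IsPath := Walk.IsPath.mk' (by rwa [Walk.support_copy])
    rw [Walk.isPath_iff_eq_nil] at hpath
    have := congrArg Walk.length hpath
    rw [Walk.length_copy, Walk.length_nil] at this
    omega
  rcases liftG_adj_none hadj1 with hs | hs <;> rcases liftG_adj_none hadj2 with ht | ht
  · exact absurd (ht.trans hs.symm) hne_ends
  · -- r : Walk (some v) (some u)
    obtain ⟨p, hp⟩ := liftG_walk_down r ht hs hr_none
    refine ⟨p.reverse, fun z => ?_⟩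
    rw [Walk.support_reverse, List.count_reverse, hp z, hr_count_some z]
  · -- r : Walk (some u) (some v)
    obtain ⟨p, hp⟩ := liftG_walk_down r ht hs hr_none
    refine ⟨p, fun z => ?_⟩
    rw [hp z, hr_count_some z]
  · exact absurd (ht.trans hs.symm) hne_ends
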